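/- Let (G,L) be a minimal list-obstruction with L(v) ⊆ {1,2,3} and |L(v)| ≤ 2 for all vertices, suppose every list is nonempty, and suppose the set V_1 of vertices with singleton lists has size exactly 2, say V_1 = {x,y} with L(x) = {α} and L(y) = {β}. Then G has a Hamiltonian path from x to y. -/

import Mathlib

def ListColorableOn {V : Type*} (G : SimpleGraph V) (L : V → Finset ℕ) (S : Set V) : Prop :=
  ∃ c : V → ℕ, (∀ v ∈ S, c v ∈ L v) ∧ ∀ u ∈ S, ∀ w ∈ S, G.Adj u w → c u ≠ c w

def MinimalListObstruction {V : Type*} (G : SimpleGraph V) (L : V → Finset ℕ) : Prop :=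
  ¬ ListColorableOn G L Set.univ ∧ ∀ S : Set V, S ≠ Set.univ → ListColorableOn G L S

universe u

theorem aux_stmt16 : ∀ (n : ℕ) (V : Type u) (_ : Fintype V) (_ : DecidableEq V)
    (G : SimpleGraph V) (L : V → Finset ℕ),
    Fintype.card V ≤ n →
    (∀ v, (L v).card ≤ 2) → (∀ v, (L v).Nonempty) →
    MinimalListObstruction G L →
    ∀ (x y : V), x ≠ y → ∀ (α β : ℕ), L x = {α} → L y = {β} →
    ∃ p : G.Walk x y, p.IsHamiltonian := by
  intro n
  induction n with
  | zero =>
    intro V _ _ G L hcard _ _ _ x y _ _ _ _ _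
    have : 0 < Fintype.card V := Fintype.card_pos_iff.2 ⟨x⟩
    omega
  | succ n ih =>
    intro V instF instD G L hcard hsize hne hmin x y hxy α β hx hy
    classical
    -- Step 1: color G - x
    obtain ⟨c₀, hc₀mem, hc₀prop⟩ :=
      hmin.2 (Set.univ \ {x}) (by
        intro h
        have : x ∈ Set.univ \ ({x} : Set V) := by rw [h]; trivial
        simp at this)
    set c : V → ℕ := Function.update c₀ x α with hc
    have hc_mem : ∀ v, c v ∈ L v := by
      intro v
      by_cases hv : v = x
      · subst hv; simp [hc, hx]
      · rw [hc, Function.update_of_ne hv]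
        exact hc₀mem v (by simp [hv])
    -- Step 2: find a conflict neighbor of x with α in its list
    have hxz : ∃ z, G.Adj x z ∧ α ∈ L z := by
      have hnot : ¬ (∀ u ∈ Set.univ, ∀ w ∈ Set.univ, G.Adj u w → c u ≠ c w) := by
        intro h
        exact hmin.1 ⟨c, fun v _ => hc_mem v, h⟩
      push_neg at hnot
      obtain ⟨u, -, w, -, hadj, heq⟩ := hnot
      by_cases hu : u = x
      · have hw : w ≠ x := by
          intro h
          rw [hu, h] at hadj
          exact G.loopless.irrefl x hadj
        refine ⟨w, hu ▸ hadj, ?_⟩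
        have h1 : c w = α := by rw [← heq, hu, hc]; simp
        rw [hc, Function.update_of_ne hw] at h1
        rw [← h1]
        exact hc₀mem w (by simp [hw])
      · by_cases hw : w = x
        · have hu' : u ≠ x := hu
          refine ⟨u, (hw ▸ hadj).symm, ?_⟩
          have h1 : c u = α := by rw [heq, hw, hc]; simp
          rw [hc, Function.update_of_ne hu'] at h1
          rw [← h1]
          exact hc₀mem u (by simp [hu'])
        · exfalso
          have h2 : c u = c₀ u := by rw [hc, Function.update_of_ne hu]
          have h3 : c w = c₀ w := by rw [hc, Function.update_of_ne hw]
          exact hc₀prop u (by simp [hu]) w (by simp [hw]) hadj (by rw [← h2, ← h3, heq])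
    -- Case A: some neighbor of x has list exactly {α}
    by_cases hA : ∃ z, G.Adj x z ∧ L z = {α}
    · obtain ⟨z, hzadj, hzL⟩ := hA
      have hzx : z ≠ x := fun h => hzadj.ne h.symm
      have hVsub : ∀ v : V, v = x ∨ v = z := by
        by_contra h
        push_neg at h
        obtain ⟨v, hv1, hv2⟩ := h
        obtain ⟨c₁, hm, hp⟩ := hmin.2 {x, z} (by
          intro hS
          have : v ∈ ({x, z} : Set V) := by rw [hS]; trivial
          rcases this with h | h
          · exact hv1 h
          · exact hv2 h)
        have hne1 := hp x (by simp) z (by simp) hzadj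
        have hc1x : c₁ x = α := by
          have := hm x (by simp); rw [hx, Finset.mem_singleton] at this; exact this
        have hc1z : c₁ z = α := by
          have := hm z (by simp); rw [hzL, Finset.mem_singleton] at this; exact this
        exact hne1 (hc1x.trans hc1z.symm)
      have hyz : y = z := by
        rcases hVsub y with h | h
        · exact absurd h (Ne.symm hxy)
        · exact h
      subst hyz
      refine ⟨SimpleGraph.Walk.cons hzadj SimpleGraph.Walk.nil, ?_⟩
      intro a
      rcases hVsub a with h | h <;> subst h <;>
        simp [SimpleGraph.Walk.support_cons, List.count_cons, hxy, Ne.symm hxy]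
    · -- Case B: every neighbor of x with α in its list has a 2-element list
      have hB : ∀ z, G.Adj x z → α ∈ L z → (L z).card = 2 := by
        intro z hadj hα
        have h1 : 1 ≤ (L z).card := Finset.card_pos.2 ⟨α, hα⟩
        have h2 : (L z).card ≤ 2 := hsize z
        by_contra hne2
        have hcard1 : (L z).card = 1 := by omega
        obtain ⟨a, ha⟩ := Finset.card_eq_one.1 hcard1
        rw [ha, Finset.mem_singleton] at hα
        exact hA ⟨z, hadj, by rw [ha, hα]⟩
      obtain ⟨z, hzadj, hzα⟩ := hxz
      have hz2 : (L z).card = 2 := hB z hzadj hzα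
      obtain ⟨γ, hγ⟩ : ∃ γ, L z \ {α} = {γ} := by
        apply Finset.card_eq_one.1
        rw [Finset.card_sdiff_of_subset (Finset.singleton_subset_iff.2 hzα), hz2]
        simp
      have hzx : z ≠ x := fun h => hzadj.ne h.symm
      have hzy : z ≠ y := by
        intro h
        rw [h, hy] at hz2
        simp at hz2
      have hyx : y ≠ x := Ne.symm hxy
      -- the reduced instance on V' = V \ {x}
      let V' := {v : V // v ≠ x}
      let G' : SimpleGraph V' := G.comap Subtype.val
      let L' : V' → Finset ℕ := fun w => if G.Adj x w.val then L w.val \ {α} else L w.val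
      have hL'sub : ∀ w : V', L' w ⊆ L w.val := by
        intro w
        by_cases h : G.Adj x w.val
        · simp only [L', if_pos h]; exact Finset.sdiff_subset
        · simp only [L', if_neg h]
          exact Finset.Subset.refl _
      have hcard' : Fintype.card V' ≤ n := by
        have h1 : Fintype.card V' = Fintype.card V - 1 := by
          have : Fintype.card {v : V // v = x} = 1 := Fintype.card_subtype_eq x
          have h2 := Fintype.card_subtype_compl (fun v : V => v = x)
          rw [this] at h2
          exact h2
        omega
      have hsize' : ∀ w : V', (L' w).card ≤ 2 :=
        fun w => le_trans (Finset.card_le_card (hL'sub w)) (hsize w.val)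
      have hne' : ∀ w : V', (L' w).Nonempty := by
        intro w
        by_cases h : G.Adj x w.val
        · simp only [L', if_pos h]
          by_cases hα : α ∈ L w.val
          · rw [← Finset.card_pos, Finset.card_sdiff_of_subset (Finset.singleton_subset_iff.2 hα),
              hB w.val h hα]
            simp
          · rw [(Finset.sdiff_singleton_eq_erase _ _).trans (Finset.erase_eq_of_notMem hα)]; exact hne w.val
        · simp only [L', if_neg h]; exact hne w.val
      have hmin' : MinimalListObstruction G' L' := by
        constructor
        · rintro ⟨c', hm', hp'⟩
          apply hmin.1
          refine ⟨fun v => if h : v = x then α else c' ⟨v, h⟩, ?_, ?_⟩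
          · intro v _
            by_cases h : v = x
            · subst h; simp [hx]
            · simpa [h] using hL'sub ⟨v, h⟩ (hm' ⟨v, h⟩ (Set.mem_univ _))
          · intro u _ w _ hadj
            by_cases hu : u = x <;> by_cases hw : w = x
            · exact absurd (hu ▸ hw ▸ hadj) (G.irrefl)
            · have hadjxw : G.Adj x w := hu ▸ hadj
              have hc'w : c' ⟨w, hw⟩ ∈ L w \ {α} := by
                have := hm' ⟨w, hw⟩ (Set.mem_univ _)
                simpa only [L', if_pos hadjxw] using this
              simp only [dif_pos hu, dif_neg hw]
              intro h
              rw [Finset.mem_sdiff, Finset.mem_singleton] at hc'w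
              exact hc'w.2 h.symm
            · have hadjxu : G.Adj x u := (hw ▸ hadj).symm
              have hc'u : c' ⟨u, hu⟩ ∈ L u \ {α} := by
                have := hm' ⟨u, hu⟩ (Set.mem_univ _)
                simpa only [L', if_pos hadjxu] using this
              simp only [dif_pos hw, dif_neg hu]
              intro h
              rw [Finset.mem_sdiff, Finset.mem_singleton] at hc'u
              exact hc'u.2 h
            · simp only [dif_neg hu, dif_neg hw]
              exact hp' ⟨u, hu⟩ (Set.mem_univ _) ⟨w, hw⟩ (Set.mem_univ _) hadj
        · intro S' hS'
          obtain ⟨w', hw'⟩ := (Set.ne_univ_iff_exists_notMem _).1 hS'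
          obtain ⟨c₁, hm₁, hp₁⟩ := hmin.2 ((Subtype.val '' S') ∪ {x}) (by
            intro hS
            have hw'mem : w'.val ∈ (Subtype.val '' S') ∪ ({x} : Set V) := by
              rw [hS]; trivial
            rcases hw'mem with h | h
            · obtain ⟨s, hs, hsv⟩ := h
              exact hw' ((Subtype.val_injective hsv) ▸ hs)
            · exact w'.2 h)
          have hxmem : x ∈ (Subtype.val '' S') ∪ ({x} : Set V) := Or.inr rfl
          refine ⟨fun v' => c₁ v'.val, ?_, ?_⟩
          · intro v' hv'
            have hv'mem : v'.val ∈ (Subtype.val '' S') ∪ ({x} : Set V) :=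
              Or.inl ⟨v', hv', rfl⟩
            have hmem := hm₁ v'.val hv'mem
            by_cases h : G.Adj x v'.val
            · simp only [L', if_pos h, Finset.mem_sdiff, Finset.mem_singleton]
              refine ⟨hmem, ?_⟩
              have hc₁x : c₁ x = α := by
                have := hm₁ x hxmem
                rwa [hx, Finset.mem_singleton] at this
              intro hcon
              exact hp₁ x hxmem v'.val hv'mem h (by rw [hc₁x, hcon])
            · simpa only [L', if_neg h] using hmem
          · intro u' hu' w'' hw'' hadj
            exact hp₁ u'.val (Or.inl ⟨u', hu', rfl⟩) w''.val (Or.inl ⟨w'', hw'', rfl⟩) hadj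
      have hx' : L' ⟨z, hzx⟩ = {γ} := by
        simp only [L', if_pos hzadj]
        exact hγ
      have hy' : L' ⟨y, hyx⟩ = {β} := by
        by_cases h : G.Adj x y
        · have hαy : α ∉ L y := by
            intro hα
            have := hB y h hα
            rw [hy] at this; simp at this
          rw [hy] at hαy
          simp only [L', if_pos h, hy]
          exact (Finset.sdiff_singleton_eq_erase _ _).trans (Finset.erase_eq_of_notMem hαy)
        · simp only [L', if_neg h, hy]
      have hzy' : (⟨z, hzx⟩ : V') ≠ ⟨y, hyx⟩ := by
        simp [Subtype.ext_iff, hzy]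
      obtain ⟨p', hp'⟩ := ih V' inferInstance inferInstance G' L' hcard'
        hsize' hne' hmin' ⟨z, hzx⟩ ⟨y, hyx⟩ hzy' γ β hx' hy'
      let φ : G' →g G := ⟨Subtype.val, fun {a b} h => h⟩
      refine ⟨SimpleGraph.Walk.cons hzadj (p'.map φ), ?_⟩
      intro a
      rw [SimpleGraph.Walk.support_cons, SimpleGraph.Walk.support_map]
      by_cases ha : a = x
      · subst ha
        rw [List.count_cons_self]
        have : a ∉ (p'.support.map (φ : V' → V)) := by
          intro hmem
          obtain ⟨b, _, hb⟩ := List.mem_map.1 hmem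
          exact b.2 hb
        rw [List.count_eq_zero.2 this]
      · rw [List.count_cons_of_ne (Ne.symm ha)]
        have : List.count a (p'.support.map (φ : V' → V)) =
            List.count (⟨a, ha⟩ : V') p'.support := by
          exact List.count_map_of_injective p'.support (⇑φ) Subtype.val_injective ⟨a, ha⟩
        rw [this]
        convert hp' ⟨a, ha⟩

theorem stmt_16 {V : Type*} [Fintype V] [DecidableEq V] (G : SimpleGraph V) (L : V → Finset ℕ)
    (hsub : ∀ v, L v ⊆ ({1, 2, 3} : Finset ℕ)) (hsize : ∀ v, (L v).card ≤ 2)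
    (hne : ∀ v, (L v).Nonempty)
    (hmin : MinimalListObstruction G L)
    (x y : V) (hxy : x ≠ y) (α β : ℕ) (hx : L x = {α}) (hy : L y = {β})
    (hV1 : {v : V | (L v).card = 1} = {x, y}) :
    ∃ p : G.Walk x y, p.IsHamiltonian := by
  exact aux_stmt16 (Fintype.card V) V ‹_› ‹_› G L le_rfl hsize hne hmin x y hxy α β hx hy
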